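/- An infinite, connected, locally finite graph G of finite valence is parabolic (the modulus of chains from a fixed vertex to infinity is zero) whenever there exists a sequence (A_k) of pairwise disjoint nested annuli, each separating a fixed vertex v₀ from ∞, with Σ_k 1/mod(A_k) = ∞. -/

import Mathlib

open scoped ENNReal

/-- A chain in a graph: a sequence of vertices (finite if `len < ⊤`, one-sidedly
infinite if `len = ⊤`), consecutive vertices being adjacent. -/
structure GChain {V : Type*} (G : SimpleGraph V) where
  f : ℕ → V
  len : ℕ∞
  adj : ∀ i : ℕ, (i : ℕ∞) < len → G.Adj (f i) (f (i + 1))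

/-- The weighted length `Σ m(x_j)` of a chain with respect to a mass distribution. -/
noncomputable def wlen {V : Type*} {G : SimpleGraph V} (m : V → ℝ≥0∞) (c : GChain G) : ℝ≥0∞ :=
  ∑' i : ℕ, if (i : ℕ∞) ≤ c.len then m (c.f i) else 0

/-- Admissibility: every chain of the family has weighted length at least 1. -/
def Admissible {V : Type*} {G : SimpleGraph V} (m : V → ℝ≥0∞) (F : Set (GChain G)) : Prop :=
  ∀ c ∈ F, 1 ≤ wlen m c

/-- The combinatorial (vertex) modulus of a family of chains. -/
noncomputable def gmod {V : Type*} (G : SimpleGraph V) (F : Set (GChain G)) : ℝ≥0∞ :=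
  ⨅ (m : V → ℝ≥0∞) (_ : Admissible m F), ∑' v, (m v) ^ 2

/-- Chains connecting the set `A` to `∞`: infinite chains starting in `A` that
eventually leave every finite set. -/
def ChainSetToInf {V : Type*} (G : SimpleGraph V) (A : Set V) : Set (GChain G) :=
  {c | c.len = ⊤ ∧ c.f 0 ∈ A ∧ ∀ K : Set V, K.Finite → ∃ N : ℕ, ∀ n ≥ N, c.f n ∉ K}

/-- Chains connecting `v₀` to `∞`. -/
def ChainToInf {V : Type*} (G : SimpleGraph V) (v0 : V) : Set (GChain G) :=
  ChainSetToInf G {v0}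

/-- Finite chains connecting the set `A` to the set `B`. -/
def ChainConn {V : Type*} (G : SimpleGraph V) (A B : Set V) : Set (GChain G) :=
  {c | ∃ n : ℕ, c.len = (n : ℕ∞) ∧ c.f 0 ∈ A ∧ c.f n ∈ B}

/-- A set of vertices is connected (a domain) if it is nonempty and any two of its
vertices are joined by a walk all of whose vertices lie in the set. -/
def VConnected {V : Type*} (G : SimpleGraph V) (S : Set V) : Prop :=
  S.Nonempty ∧ ∀ a ∈ S, ∀ b ∈ S, ∃ w : G.Walk a b, ∀ x ∈ w.support, x ∈ S

/-- `B` separates `S` from `∞`: every chain connecting `S` to `∞` meets `B`. -/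
def Separates {V : Type*} (G : SimpleGraph V) (B S : Set V) : Prop :=
  ∀ c ∈ ChainSetToInf G S, ∃ n : ℕ, c.f n ∈ B

/-- `A` is an annulus with inner component `Inn` (finite) and outer component `Out`. -/
structure IsAnnulus {V : Type*} (G : SimpleGraph V) (A Inn Out : Set V) : Prop where
  compl_eq : Aᶜ = Inn ∪ Out
  disj : Disjoint Inn Out
  inner_fin : Inn.Finite
  inner_conn : VConnected G Inn
  outer_conn : VConnected G Out
  outer_inf : Out.Infinite

/-- The modulus of an annulus: modulus of the family of chains connecting its two
complementary components. -/
noncomputable def annMod {V : Type*} (G : SimpleGraph V) (Inn Out : Set V) : ℝ≥0∞ :=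
  gmod G (ChainConn G Inn Out)

/-- A graph is parabolic if the modulus of the family of chains from a (hence every)
fixed vertex to infinity vanishes. -/
def GraphParabolic {V : Type*} (G : SimpleGraph V) : Prop :=
  ∀ v0 : V, gmod G (ChainToInf G v0) = 0

section AuxCannon

open SimpleGraph

variable {V : Type*} {G : SimpleGraph V}

private lemma chain_adj_top {c : GChain G} (h : c.len = ⊤) (i : ℕ) :
    G.Adj (c.f i) (c.f (i + 1)) :=
  c.adj i (by rw [h]; exact lt_of_le_of_ne le_top (by simp))

private lemma wlen_top_eq {m : V → ℝ≥0∞} {c : GChain G} (h : c.len = ⊤) :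
    wlen m c = ∑' i, m (c.f i) := by
  unfold wlen
  rw [h]
  simp

private lemma wlen_coe_eq {m : V → ℝ≥0∞} {c : GChain G} {n : ℕ} (h : c.len = (n : ℕ∞)) :
    wlen m c = ∑ t ∈ Finset.range (n + 1), m (c.f t) := by
  unfold wlen
  rw [h, tsum_eq_sum (s := Finset.range (n + 1)) ?_]
  · refine Finset.sum_congr rfl fun t ht => if_pos ?_
    exact_mod_cast Nat.lt_succ_iff.mp (Finset.mem_range.mp ht)
  · intro t ht
    refine if_neg fun hc => ht (Finset.mem_range.mpr (Nat.lt_succ_iff.mpr ?_))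
    exact_mod_cast hc

private lemma wlen_mul (a : ℝ≥0∞) (m : V → ℝ≥0∞) (c : GChain G) :
    wlen (fun v => a * m v) c = a * wlen m c := by
  unfold wlen
  rw [← ENNReal.tsum_mul_left]
  exact tsum_congr fun i => by split <;> simp

private lemma tsum_shift_le {g : ℕ → ℝ≥0∞} (L : ℕ) :
    (∑' n, if L ≤ n then g n else 0) ≤ ∑' n, g (n + L) := by
  rw [ENNReal.tsum_eq_iSup_sum]
  refine iSup_le fun s => ?_
  have h1 : (∑ n ∈ s, if L ≤ n then g n else 0)
      = ∑ n ∈ s.filter (fun n => L ≤ n), g n := by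
    rw [Finset.sum_filter]
  rw [h1]
  have h2 : ∑ n ∈ s.filter (fun n => L ≤ n), g n
      = ∑ n ∈ (s.filter (fun n => L ≤ n)).image (fun n => n - L), g (n + L) := by
    rw [Finset.sum_image]
    · refine Finset.sum_congr rfl fun n hn => ?_
      have hL : L ≤ n := (Finset.mem_filter.mp hn).2
      rw [Nat.sub_add_cancel hL]
    · intro x hx y hy hxy
      have hLx : L ≤ x := (Finset.mem_filter.mp hx).2
      have hLy : L ≤ y := (Finset.mem_filter.mp hy).2
      simp only at hxy
      omega
  rw [h2]
  exact ENNReal.sum_le_tsum _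

private lemma mul_le_sq_add_sq (a b : ℝ≥0∞) : a * b ≤ a ^ 2 + b ^ 2 := by
  rcases le_total a b with h | h
  · calc a * b ≤ b * b := mul_le_mul_left h b
      _ = b ^ 2 := (sq b).symm
      _ ≤ a ^ 2 + b ^ 2 := le_add_self
  · calc a * b ≤ a * a := mul_le_mul_right h a
      _ = a ^ 2 := (sq a).symm
      _ ≤ a ^ 2 + b ^ 2 := le_self_add

private lemma sq_sum_le_ennreal {ι : Type*} (s : Finset ι) (a : ι → ℝ≥0∞) :
    (∑ k ∈ s, a k) ^ 2 ≤ 2 * s.card * ∑ k ∈ s, a k ^ 2 := by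
  rw [sq, Finset.sum_mul_sum]
  calc ∑ k ∈ s, ∑ l ∈ s, a k * a l
      ≤ ∑ k ∈ s, ∑ l ∈ s, (a k ^ 2 + a l ^ 2) := by
        refine Finset.sum_le_sum fun k _ => Finset.sum_le_sum fun l _ => ?_
        exact mul_le_sq_add_sq _ _
    _ = ∑ k ∈ s, ((s.card : ℝ≥0∞) * a k ^ 2 + ∑ l ∈ s, a l ^ 2) := by
        refine Finset.sum_congr rfl fun k _ => ?_
        rw [Finset.sum_add_distrib, Finset.sum_const, nsmul_eq_mul]
    _ = (s.card : ℝ≥0∞) * (∑ k ∈ s, a k ^ 2) + (s.card : ℝ≥0∞) * ∑ l ∈ s, a l ^ 2 := by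
        rw [Finset.sum_add_distrib, ← Finset.mul_sum, Finset.sum_const, nsmul_eq_mul]
    _ = 2 * s.card * ∑ k ∈ s, a k ^ 2 := by ring

private lemma exists_crossing {In Ou Aset : Set V} {c : GChain G}
    (hlen : c.len = ⊤) (h0 : c.f 0 ∈ In)
    (hdisjIO : ∀ x ∈ In, x ∉ Ou) (htri : ∀ x, x ∉ Aset → x ∈ In ∨ x ∈ Ou)
    (hout : ∃ n, c.f n ∈ Ou) :
    ∃ i j : ℕ, i < j ∧ c.f i ∈ In ∧ c.f j ∈ Ou ∧
      ∀ t, i < t → t < j → c.f t ∈ Aset := by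
  classical
  have hj : c.f (Nat.find hout) ∈ Ou := Nat.find_spec hout
  set j := Nat.find hout with hjdef
  have hjmin : ∀ t, t < j → c.f t ∉ Ou := fun t ht => Nat.find_min hout ht
  have hj0 : j ≠ 0 := fun h => hdisjIO _ h0 (h ▸ hj)
  set P : ℕ → Prop := fun t => c.f t ∈ In with hPdef
  have hP0 : P 0 := h0
  set i := Nat.findGreatest P (j - 1) with hidef
  have hi : P i := Nat.findGreatest_spec (Nat.zero_le (j-1)) hP0
  have hij : i < j := lt_of_le_of_lt (Nat.findGreatest_le _) (by omega)
  refine ⟨i, j, hij, hi, hj, fun t hit htj => ?_⟩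
  by_contra hA
  rcases htri _ hA with h | h
  · exact Nat.findGreatest_is_greatest hit (by omega) h
  · exact hjmin t htj h

end AuxCannon
section AuxCannon2

open SimpleGraph

variable {V : Type*} {G : SimpleGraph V}

private def Reach (G : SimpleGraph V) (S F : Set V) (v : V) : Set V :=
  {y | ∃ w : G.Walk v y, ∀ x ∈ w.support, x ∈ S ∧ x ∉ F}

private lemma reach_step (hlf : ∀ v : V, (G.neighborSet v).Finite) {S F : Set V} {v : V}
    (hR : (Reach G S F v).Infinite) :
    ∃ u, G.Adj v u ∧ u ∈ S ∧ u ∉ F ∪ {v} ∧ (Reach G S (F ∪ {v}) u).Infinite := by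
  classical
  by_contra hcon
  push_neg at hcon
  have hcover : Reach G S F v \ {v} ⊆ ⋃ u ∈ G.neighborSet v, Reach G S (F ∪ {v}) u := by
    rintro y ⟨⟨w, hw⟩, hy⟩
    have hyv : v ≠ y := fun h => hy (by simp [← h])
    obtain ⟨u, hadj, q, hq⟩ := Walk.exists_eq_cons_of_ne hyv w.bypass
    have hbp := w.bypass_isPath
    rw [hq, Walk.cons_isPath_iff] at hbp
    have hsup : ∀ x ∈ q.support, x ∈ S ∧ x ∉ F ∪ {v} := by
      intro x hx
      have hx' : x ∈ w.bypass.support := by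
        rw [hq, Walk.support_cons]; exact List.mem_cons_of_mem _ hx
      have hxw := hw x (w.support_bypass_subset hx')
      refine ⟨hxw.1, ?_⟩
      simp only [Set.mem_union, Set.mem_singleton_iff]
      rintro (h | h)
      · exact hxw.2 h
      · exact hbp.2 (h ▸ hx)
    exact Set.mem_biUnion hadj ⟨q, hsup⟩
  have hfin : (⋃ u ∈ G.neighborSet v, Reach G S (F ∪ {v}) u).Finite := by
    refine Set.Finite.biUnion (hlf v) fun u hu => ?_
    rw [← Set.not_infinite]
    intro hinf
    obtain ⟨y, hy⟩ := hinf.nonempty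
    obtain ⟨w, hw⟩ := hy
    have hu' := hw u w.start_mem_support
    exact absurd hinf (Set.not_infinite.mpr (hcon u hu hu'.1 hu'.2))
  refine hR ((hfin.insert v).subset fun y hy => ?_)
  rcases eq_or_ne y v with h | h
  · exact Set.mem_insert_iff.mpr (Or.inl h)
  · exact Set.mem_insert_iff.mpr (Or.inr (hcover ⟨hy, h⟩))

private lemma exists_ray (hlf : ∀ v : V, (G.neighborSet v).Finite) {S : Set V}
    (hSinf : S.Infinite) (hScon : VConnected G S) {x : V} (hx : x ∈ S) :
    ∃ c : GChain G, c.len = ⊤ ∧ c.f 0 = x ∧ (∀ n, c.f n ∈ S) ∧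
      (∀ K : Set V, K.Finite → ∃ N : ℕ, ∀ n ≥ N, c.f n ∉ K) := by
  classical
  set Inv : V × Set V → Prop := fun p => p.1 ∈ S ∧ p.1 ∉ p.2 ∧ (Reach G S p.2 p.1).Infinite
    with hInv
  set step : V × Set V → V × Set V := fun p =>
    if h : (Reach G S p.2 p.1).Infinite then
      ((reach_step hlf h).choose, p.2 ∪ {p.1}) else p with hstepdef
  have hstep : ∀ p, Inv p → G.Adj p.1 (step p).1 ∧ (step p).2 = p.2 ∪ {p.1} ∧ Inv (step p) := by
    intro p hp
    obtain ⟨hp1, hp2, hp3⟩ := hp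
    have hspec := (reach_step hlf hp3).choose_spec
    have he : step p = ((reach_step hlf hp3).choose, p.2 ∪ {p.1}) := by
      rw [hstepdef]
      exact dif_pos hp3
    rw [he]
    exact ⟨hspec.1, rfl, hspec.2.1, hspec.2.2.1, hspec.2.2.2⟩
  set seq : ℕ → V × Set V := fun n => step^[n] (x, ∅) with hseq
  have hseqsucc : ∀ n, seq (n + 1) = step (seq n) := fun n => Function.iterate_succ_apply' _ _ _
  have hInv0 : Inv (seq 0) := by
    refine ⟨hx, Set.notMem_empty x, ?_⟩
    refine hSinf.mono fun b hb => ?_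
    obtain ⟨w, hw⟩ := hScon.2 x hx b hb
    exact ⟨w, fun z hz => ⟨hw z hz, Set.notMem_empty z⟩⟩
  have hInvn : ∀ n, Inv (seq n) := by
    intro n
    induction n with
    | zero => exact hInv0
    | succ n ih => rw [hseqsucc]; exact (hstep _ ih).2.2
  have hadj : ∀ n, G.Adj (seq n).1 (seq (n + 1)).1 := by
    intro n; rw [hseqsucc]; exact (hstep _ (hInvn n)).1
  have hFsucc : ∀ n, (seq (n + 1)).2 = (seq n).2 ∪ {(seq n).1} := by
    intro n; rw [hseqsucc]; exact (hstep _ (hInvn n)).2.1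
  have hmemF : ∀ n m, m < n → (seq m).1 ∈ (seq n).2 := by
    intro n
    induction n with
    | zero => omega
    | succ n ih =>
      intro m hm
      rw [hFsucc]
      rcases Nat.lt_or_ge m n with h | h
      · exact Set.mem_union_left _ (ih m h)
      · have : m = n := by omega
        subst this
        exact Set.mem_union_right _ rfl
  have hinj : Function.Injective (fun n => (seq n).1) := by
    intro a b hab
    simp only at hab
    by_contra hne
    rcases Nat.lt_or_ge a b with h | h
    · exact (hInvn b).2.1 (hab ▸ hmemF b a h)
    · have h' : b < a := by omega
      exact (hInvn a).2.1 (hab.symm ▸ hmemF a b h')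
  refine ⟨⟨fun n => (seq n).1, ⊤, fun i _ => hadj i⟩, rfl, ?_, fun n => (hInvn n).1, ?_⟩
  · show (seq 0).1 = x
    rfl
  · intro K hK
    have hfin : {n : ℕ | (seq n).1 ∈ K}.Finite := by
      have : {n : ℕ | (seq n).1 ∈ K} = (fun n => (seq n).1) ⁻¹' K := rfl
      rw [this]
      exact Set.Finite.preimage hinj.injOn hK
    obtain ⟨N, hN⟩ := hfin.bddAbove
    refine ⟨N + 1, fun n hn hnK => ?_⟩
    have := hN (show n ∈ {n : ℕ | (seq n).1 ∈ K} from hnK)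
    omega

end AuxCannon2
section AuxCannon3

open SimpleGraph

variable {V : Type*} {G : SimpleGraph V}

private def prep {a b : V} (w : G.Walk a b) (c : GChain G)
    (hlen : c.len = ⊤) (h0 : c.f 0 = b) : GChain G where
  f := fun n => if n < w.length then w.getVert n else c.f (n - w.length)
  len := ⊤
  adj := by
    intro i _
    by_cases hi : i < w.length
    · have hadj := w.adj_getVert_succ hi
      simp only [if_pos hi]
      by_cases hi1 : i + 1 < w.length
      · rw [if_pos hi1]
        exact hadj
      · have hlen1 : i + 1 = w.length := by omega
        have hb : w.getVert (i + 1) = b := by rw [hlen1, w.getVert_length]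
        rw [if_neg hi1, show i + 1 - w.length = 0 by omega, h0]
        rw [hb] at hadj
        exact hadj
    · have h1 : ¬ i + 1 < w.length := by omega
      simp only [if_neg hi, if_neg h1]
      rw [show i + 1 - w.length = (i - w.length) + 1 by omega]
      exact chain_adj_top hlen _

private lemma prep_f_lt {a b : V} {w : G.Walk a b} {c : GChain G}
    {hlen : c.len = ⊤} {h0 : c.f 0 = b} {n : ℕ} (hn : n < w.length) :
    (prep w c hlen h0).f n = w.getVert n := if_pos hn

private lemma prep_f_ge {a b : V} {w : G.Walk a b} {c : GChain G}
    {hlen : c.len = ⊤} {h0 : c.f 0 = b} {n : ℕ} (hn : ¬ n < w.length) :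
    (prep w c hlen h0).f n = c.f (n - w.length) := if_neg hn

private lemma prep_mem {a b : V} (w : G.Walk a b) (c : GChain G)
    (hlen : c.len = ⊤) (h0 : c.f 0 = b)
    (hesc : ∀ K : Set V, K.Finite → ∃ N : ℕ, ∀ n ≥ N, c.f n ∉ K) :
    prep w c hlen h0 ∈ ChainSetToInf G {a} := by
  refine ⟨rfl, ?_, ?_⟩
  · by_cases h : 0 < w.length
    · rw [prep_f_lt h, w.getVert_zero]
      rfl
    · have hl0 : w.length = 0 := by omega
      have hab : a = b := w.eq_of_length_eq_zero hl0
      rw [prep_f_ge (by omega)]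
      simp [h0, hab]
  · intro K hK
    obtain ⟨N, hN⟩ := hesc K hK
    refine ⟨N + w.length, fun n hn => ?_⟩
    rw [prep_f_ge (by omega)]
    exact hN _ (by omega)

private lemma prep_vertex {a b : V} (w : G.Walk a b) (c : GChain G)
    (hlen : c.len = ⊤) (h0 : c.f 0 = b) (n : ℕ) :
    (prep w c hlen h0).f n ∈ w.support ∨ ∃ m, (prep w c hlen h0).f n = c.f m := by
  by_cases h : n < w.length
  · rw [prep_f_lt h]
    exact Or.inl (Walk.mem_support_iff_exists_getVert.mpr ⟨n, rfl, by omega⟩)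
  · rw [prep_f_ge h]
    exact Or.inr ⟨n - w.length, rfl⟩

private lemma prep_wlen_le {a b : V} (m : V → ℝ≥0∞) (w : G.Walk a b) (c : GChain G)
    (hlen : c.len = ⊤) (h0 : c.f 0 = b) :
    wlen m (prep w c hlen h0) ≤ (∑ n ∈ Finset.range w.length, m (w.getVert n)) + wlen m c := by
  rw [wlen_top_eq rfl, wlen_top_eq hlen]
  have hpt : ∀ n, m ((prep w c hlen h0).f n) ≤
      (if n < w.length then m (w.getVert n) else 0) +
      (if w.length ≤ n then m (c.f (n - w.length)) else 0) := by
    intro n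
    by_cases h : n < w.length
    · rw [prep_f_lt h, if_pos h, if_neg (by omega)]
      simp
    · rw [prep_f_ge h, if_neg h, if_pos (by omega)]
      simp
  refine le_trans (ENNReal.tsum_le_tsum hpt) ?_
  rw [ENNReal.tsum_add]
  have h1 : (∑' n, if n < w.length then m (w.getVert n) else 0)
      = ∑ n ∈ Finset.range w.length, m (w.getVert n) := by
    rw [tsum_eq_sum (s := Finset.range w.length) ?_]
    · exact Finset.sum_congr rfl fun n hn => if_pos (Finset.mem_range.mp hn)
    · intro n hn
      exact if_neg fun h => hn (Finset.mem_range.mpr h)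
  rw [h1]
  refine add_le_add_right ?_ _
  refine le_trans (tsum_shift_le w.length) ?_
  refine le_of_eq (tsum_congr fun n => ?_)
  rw [Nat.add_sub_cancel]

private lemma gmod_transfer (hconn : G.Connected) (u v1 : V)
    (hu : gmod G (ChainToInf G u) = 0) : gmod G (ChainToInf G v1) = 0 := by
  classical
  refine le_antisymm ?_ zero_le
  refine ENNReal.le_of_forall_pos_le_add fun ε hε _ => ?_
  rw [zero_add]
  obtain ⟨w1⟩ : Nonempty (G.Walk u v1) := hconn.preconnected u v1
  set L : ℕ := w1.length with hLdef
  set η : ℝ≥0∞ := (2 * (L + 1) : ℝ≥0∞)⁻¹ with hη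
  have hη0 : 0 < η := by
    rw [hη]
    refine ENNReal.inv_pos.mpr ?_
    exact ENNReal.mul_ne_top (by simp) (by exact_mod_cast ENNReal.natCast_ne_top (L+1))
  set δ : ℝ≥0∞ := min ((ε : ℝ≥0∞) / 4) (η ^ 2) with hδ
  have hδ0 : 0 < δ := by
    rw [hδ]
    refine lt_min ?_ (ENNReal.pow_pos hη0 2)
    exact ENNReal.div_pos (by exact_mod_cast hε.ne') (by simp)
  have hlt : gmod G (ChainToInf G u) < δ := hu ▸ hδ0
  unfold gmod at hlt
  obtain ⟨m, hm⟩ := iInf_lt_iff.mp hlt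
  obtain ⟨hadm, hE⟩ := iInf_lt_iff.mp hm
  have hmb : ∀ z, m z ≤ η := by
    intro z
    by_contra h
    push_neg at h
    have h2 : η ^ 2 < m z ^ 2 := ENNReal.pow_lt_pow_left (by norm_num) h
    have h3 : m z ^ 2 ≤ ∑' v, m v ^ 2 := ENNReal.le_tsum z
    have h4 : (∑' v, m v ^ 2) < η ^ 2 := lt_of_lt_of_le hE (min_le_right _ _)
    exact absurd (h3.trans h4.le) (not_le.mpr h2)
  -- every chain from v1 to ∞ has wlen m ≥ 1/2
  have hhalf : ∀ c ∈ ChainToInf G v1, 2⁻¹ ≤ wlen m c := by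
    rintro c ⟨hclen, h0c, hesc⟩
    have h0c' : c.f 0 = v1 := h0c
    have hd := prep_mem w1 c hclen h0c' hesc
    have h1 : (1 : ℝ≥0∞) ≤ wlen m (prep w1 c hclen h0c') := hadm _ hd
    have h2 := prep_wlen_le m w1 c hclen h0c'
    have h3 : (∑ n ∈ Finset.range w1.length, m (w1.getVert n)) ≤ 2⁻¹ := by
      calc ∑ n ∈ Finset.range w1.length, m (w1.getVert n)
          ≤ (Finset.range w1.length).card • η :=
            Finset.sum_le_card_nsmul _ _ _ fun n _ => hmb _
        _ = (L : ℝ≥0∞) * η := by rw [Finset.card_range, nsmul_eq_mul, hLdef]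
        _ ≤ ((L + 1 : ℕ) : ℝ≥0∞) * η := by
            refine mul_le_mul_left ?_ _
            exact_mod_cast Nat.le_succ L
        _ = 2⁻¹ * (((L+1:ℕ) : ℝ≥0∞) * (((L+1:ℕ) : ℝ≥0∞))⁻¹) := by
            rw [hη]
            rw [ENNReal.mul_inv (Or.inl (by norm_num)) (Or.inl (by norm_num))]
            push_cast
            ring
        _ ≤ 2⁻¹ := by
            rw [ENNReal.mul_inv_cancel (by exact_mod_cast Nat.succ_ne_zero L)
              (by exact_mod_cast ENNReal.natCast_ne_top (L+1)), mul_one]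
    by_contra hcon
    push_neg at hcon
    have : wlen m (prep w1 c hclen h0c') < 1 := by
      calc wlen m (prep w1 c hclen h0c')
          ≤ (∑ n ∈ Finset.range w1.length, m (w1.getVert n)) + wlen m c := h2
        _ ≤ 2⁻¹ + wlen m c := add_le_add_left h3 _
        _ < 2⁻¹ + 2⁻¹ := by
            exact ENNReal.add_lt_add_left (by norm_num) hcon
        _ = 1 := ENNReal.inv_two_add_inv_two
    exact absurd h1 (not_le.mpr this)
  -- 2*m is admissible for v1
  have hadm2 : Admissible (fun v => 2 * m v) (ChainToInf G v1) := by
    intro c hc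
    rw [wlen_mul]
    calc (1:ℝ≥0∞) = 2 * 2⁻¹ := by
          rw [ENNReal.mul_inv_cancel (by norm_num) (by norm_num)]
      _ ≤ 2 * wlen m c := mul_le_mul_right (hhalf c hc) 2
  have hgm : gmod G (ChainToInf G v1) ≤ ∑' v, (2 * m v) ^ 2 := by
    unfold gmod
    exact iInf₂_le (fun v => 2 * m v) hadm2
  refine hgm.trans ?_
  calc ∑' v, (2 * m v) ^ 2 = ∑' v, 4 * m v ^ 2 := by
        refine tsum_congr fun v => ?_
        rw [mul_pow]
        norm_num
    _ = 4 * ∑' v, m v ^ 2 := ENNReal.tsum_mul_left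
    _ ≤ 4 * ((ε : ℝ≥0∞) / 4) := by
        refine mul_le_mul_right ?_ _
        exact hE.le.trans (min_le_left _ _)
    _ ≤ (ε : ℝ≥0∞) := by
        rw [ENNReal.mul_div_cancel' (by norm_num) (by norm_num)]
    _ = 0 + (ε : ℝ≥0∞) := (zero_add _).symm
    _ = (ε : ℝ≥0∞) := zero_add _

end AuxCannon3
section AuxCannon4

open SimpleGraph

variable {V : Type*} {G : SimpleGraph V}

private def Tnbhd (G : SimpleGraph V) (Aset : Set V) : Set V :=
  {v | ∃ u ∈ Aset, u = v ∨ G.Adj u v}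

/-- From a crossing pair `i < j`, the subchain joins `In` to `Ou`, so any admissible `g`
collects mass at least 1 along the vertices of `c` between `i` and `j`. -/
private lemma crossing_wlen {In Ou : Set V} {c : GChain G} (hlen : c.len = ⊤)
    {g : V → ℝ≥0∞} {i j : ℕ} (hij : i < j) (hi : c.f i ∈ In) (hj : c.f j ∈ Ou)
    (hadm : Admissible g (ChainConn G In Ou)) :
    (1:ℝ≥0∞) ≤ ∑ t ∈ Finset.range (j - i + 1), g (c.f (i + t)) := by
  classical
  set d : GChain G := ⟨fun t => c.f (i + t), ((j - i : ℕ) : ℕ∞),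
    fun t _ => chain_adj_top hlen (i + t)⟩ with hddef
  have hd : d ∈ ChainConn G In Ou := by
    refine ⟨j - i, rfl, ?_, ?_⟩
    · show c.f (i + 0) ∈ In
      simpa using hi
    · show c.f (i + (j - i)) ∈ Ou
      rw [Nat.add_sub_cancel' hij.le]
      exact hj
  have h1 : (1:ℝ≥0∞) ≤ wlen g d := hadm d hd
  rwa [wlen_coe_eq rfl] at h1

private lemma crossing_tsum {In Ou : Set V} {c : GChain G} (hlen : c.len = ⊤)
    {g : V → ℝ≥0∞} {i j : ℕ} (hij : i < j) (hi : c.f i ∈ In) (hj : c.f j ∈ Ou)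
    (hadm : Admissible g (ChainConn G In Ou)) :
    (1:ℝ≥0∞) ≤ ∑' n, g (c.f n) := by
  refine (crossing_wlen hlen hij hi hj hadm).trans ?_
  have h2 : ∑ t ∈ Finset.range (j - i + 1), g (c.f (i + t))
      = ∑ n ∈ (Finset.range (j - i + 1)).image (fun t => i + t), g (c.f n) := by
    rw [Finset.sum_image]
    intro x _ y _ h
    simp only at h
    omega
  rw [h2]
  exact ENNReal.sum_le_tsum _

/-- Case-B version: the admissible function may be truncated outside the neighborhood
of the annulus `Aset`. -/
private lemma crossing_tsum_res {In Ou Aset : Set V} {c : GChain G} (hlen : c.len = ⊤)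
    (h0 : c.f 0 ∈ In) (hdisjIO : ∀ x ∈ In, x ∉ Ou)
    (htri : ∀ x, x ∉ Aset → x ∈ In ∨ x ∈ Ou) (hout : ∃ n, c.f n ∈ Ou)
    (hedge : ∀ x ∈ In, ∀ y ∈ Ou, ¬ G.Adj x y)
    {m : V → ℝ≥0∞} (hadm : Admissible m (ChainConn G In Ou)) :
    (1:ℝ≥0∞) ≤ ∑' n, (Tnbhd G Aset).indicator m (c.f n) := by
  classical
  obtain ⟨i, j, hij, hi, hj, hmid⟩ := exists_crossing hlen h0 hdisjIO htri hout
  have hij2 : i + 1 < j := by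
    rcases Nat.lt_or_ge (i + 1) j with h | h
    · exact h
    · have hji : j = i + 1 := by omega
      have hadjc := chain_adj_top hlen i
      rw [← hji] at hadjc
      exact absurd hadjc (hedge _ hi _ hj)
  have hT : ∀ t ≤ j - i, c.f (i + t) ∈ Tnbhd G Aset := by
    intro t ht
    rcases Nat.eq_zero_or_pos t with rfl | htpos
    · refine ⟨c.f (i + 1), hmid _ (by omega) (by omega), Or.inr ?_⟩
      have hadjc := chain_adj_top hlen i
      rw [show i + 0 = i by omega]
      exact hadjc.symm
    · rcases Nat.lt_or_ge (i + t) j with hlt | hge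
      · exact ⟨c.f (i + t), hmid _ (by omega) hlt, Or.inl rfl⟩
      · have hjt : i + t = j := by omega
        refine ⟨c.f (j - 1), hmid _ (by omega) (by omega), Or.inr ?_⟩
        have hadjc := chain_adj_top hlen (j - 1)
        rw [show j - 1 + 1 = j by omega] at hadjc
        rw [hjt]
        exact hadjc
  have hkey := crossing_wlen hlen hij hi hj hadm
  have heq : ∑ t ∈ Finset.range (j - i + 1), m (c.f (i + t))
      = ∑ t ∈ Finset.range (j - i + 1), (Tnbhd G Aset).indicator m (c.f (i + t)) := by
    refine Finset.sum_congr rfl fun t ht => ?_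
    rw [Set.indicator_of_mem (hT t (by simpa [Nat.lt_succ_iff] using Finset.mem_range.mp ht)) m]
  rw [heq] at hkey
  refine hkey.trans ?_
  have h2 : ∑ t ∈ Finset.range (j - i + 1), (Tnbhd G Aset).indicator m (c.f (i + t))
      = ∑ n ∈ (Finset.range (j - i + 1)).image (fun t => i + t),
          (Tnbhd G Aset).indicator m (c.f n) := by
    rw [Finset.sum_image]
    intro x _ y _ h
    simp only at h
    omega
  rw [h2]
  exact ENNReal.sum_le_tsum _

/-- A vertex belongs to at most `D + 1` of the neighborhoods `Tnbhd G (A k)`. -/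
private lemma card_tnbhd_le {A : ℕ → Set V}
    (hdisj : Pairwise fun k l => Disjoint (A k) (A l)) {D : ℕ}
    (hval : ∀ v : V, (G.neighborSet v).ncard ≤ D)
    (hlocfin : ∀ v : V, (G.neighborSet v).Finite)
    (v : V) (s : Finset ℕ) (hs : ∀ k ∈ s, v ∈ Tnbhd G (A k)) :
    s.card ≤ D + 1 := by
  classical
  set wit : ℕ → V := fun k => if h : v ∈ Tnbhd G (A k) then h.choose else v with hwit
  have hwitA : ∀ k ∈ s, wit k ∈ A k ∧ (wit k = v ∨ G.Adj (wit k) v) := by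
    intro k hk
    have h := hs k hk
    rw [hwit]
    simp only [dif_pos h]
    exact ⟨h.choose_spec.1, h.choose_spec.2⟩
  have hcard : s.card ≤ (insert v (hlocfin v).toFinset).card := by
    refine Finset.card_le_card_of_injOn wit ?_ ?_
    · intro k hk
      rcases (hwitA k hk).2 with h | h
      · rw [h]
        exact Finset.mem_insert_self _ _
      · refine Finset.mem_insert_of_mem ?_
        rw [Set.Finite.mem_toFinset]
        exact h.symm
    · intro k hk l hl hkl
      by_contra hne
      exact Set.disjoint_left.mp (hdisj hne) (hwitA k hk).1 (hkl ▸ (hwitA l hl).1)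
  refine hcard.trans ?_
  refine (Finset.card_insert_le _ _).trans ?_
  have hnc : (hlocfin v).toFinset.card = (G.neighborSet v).ncard :=
    (Set.ncard_eq_toFinset_card _ (hlocfin v)).symm
  have := hval v
  omega

end AuxCannon4
/-- An infinite, connected, locally finite graph of finite valence is parabolic
whenever there exists a sequence of pairwise disjoint nested annuli, each separating
a fixed vertex `v₀` from `∞`, with `Σ_k 1/mod(A_k) = ∞`. -/
theorem graphParabolic_of_annuli {V : Type*} (G : SimpleGraph V)
    (hinf : Infinite V) (hconn : G.Connected)
    (D : ℕ) (hval : ∀ v : V, (G.neighborSet v).ncard ≤ D)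
    (hlocfin : ∀ v : V, (G.neighborSet v).Finite)
    (v0 : V) (A Inn Out : ℕ → Set V)
    (hAnn : ∀ k, IsAnnulus G (A k) (Inn k) (Out k))
    (hdisj : Pairwise fun k l => Disjoint (A k) (A l))
    (hnested : ∀ k, Separates G (A (k + 1)) (A k))
    (hsep : ∀ k, Separates G (A k) {v0})
    (hsum : ∑' k : ℕ, (annMod G (Inn k) (Out k))⁻¹ = ⊤) :
    GraphParabolic G := by
  classical
  -- basic set-theoretic facts about the annuli
  have htri : ∀ k, ∀ x, x ∉ A k → x ∈ Inn k ∨ x ∈ Out k := by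
    intro k x hx
    have hx' : x ∈ (A k)ᶜ := hx
    rw [(hAnn k).compl_eq] at hx'
    exact hx'
  have hInnA : ∀ k, ∀ x ∈ Inn k, x ∉ A k := by
    intro k x hx hxA
    have h : x ∈ (A k)ᶜ := by
      rw [(hAnn k).compl_eq]
      exact Or.inl hx
    exact h hxA
  have hOutA : ∀ k, ∀ x ∈ Out k, x ∉ A k := by
    intro k x hx hxA
    have h : x ∈ (A k)ᶜ := by
      rw [(hAnn k).compl_eq]
      exact Or.inr hx
    exact h hxA
  have hIO : ∀ k, ∀ x ∈ Inn k, x ∉ Out k :=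
    fun k x hx hy => Set.disjoint_left.mp (hAnn k).disj hx hy
  -- rays to infinity inside each outer component
  have hray : ∀ k, ∀ x ∈ Out k, ∃ c : GChain G,
      c ∈ ChainSetToInf G {x} ∧ ∀ n, c.f n ∈ Out k := by
    intro k x hx
    obtain ⟨c, hlen, h0, hmem, hesc⟩ :=
      exists_ray hlocfin (hAnn k).outer_inf (hAnn k).outer_conn hx
    exact ⟨c, ⟨hlen, by simp [h0], hesc⟩, hmem⟩
  -- every chain to infinity meets each outer component
  have hmeets : ∀ k (c : GChain G), c.len = ⊤ →
      (∀ K : Set V, K.Finite → ∃ N : ℕ, ∀ n ≥ N, c.f n ∉ K) → ∃ n, c.f n ∈ Out k := by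
    intro k c hlen hesc
    by_contra hno
    push_neg at hno
    obtain ⟨N, hN⟩ := hesc (Inn k) (hAnn k).inner_fin
    have hAk : ∀ n, c.f (N + n) ∈ A k := by
      intro n
      by_contra h
      rcases htri k _ h with h' | h'
      · exact hN (N + n) (by omega) h'
      · exact hno _ h'
    set d : GChain G := ⟨fun n => c.f (N + n), ⊤, fun i _ => chain_adj_top hlen (N + i)⟩
      with hddef
    obtain ⟨n, hn⟩ := hnested k d ⟨rfl, hAk 0, fun K hK => by
      obtain ⟨N', hN'⟩ := hesc K hK
      exact ⟨N', fun n hn => hN' _ (by omega)⟩⟩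
    exact Set.disjoint_left.mp (hdisj (show k ≠ k + 1 by omega)) (hAk n) hn
  -- v0 is never in an outer component
  have hv0Out : ∀ k, v0 ∉ Out k := by
    intro k hv0
    obtain ⟨c, hc, hmem⟩ := hray k v0 hv0
    obtain ⟨n, hn⟩ := hsep k c hc
    exact hOutA k _ (hmem n) hn
  intro v1
  -- Case A: some annulus has zero modulus
  by_cases hzero : ∃ k, annMod G (Inn k) (Out k) = 0
  · obtain ⟨k0, hk0⟩ := hzero
    obtain ⟨u, hu⟩ := (hAnn k0).inner_conn.1
    refine gmod_transfer hconn u v1 ?_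
    refine le_antisymm ?_ zero_le
    refine ENNReal.le_of_forall_pos_le_add fun ε hε _ => ?_
    rw [zero_add]
    have hlt : gmod G (ChainConn G (Inn k0) (Out k0)) < (ε : ℝ≥0∞) := by
      have : annMod G (Inn k0) (Out k0) < (ε : ℝ≥0∞) := by
        rw [hk0]
        exact_mod_cast hε
      exact this
    unfold gmod at hlt
    obtain ⟨m, hm⟩ := iInf_lt_iff.mp hlt
    obtain ⟨hadm, hE⟩ := iInf_lt_iff.mp hm
    have hadm' : Admissible m (ChainToInf G u) := by
      rintro c ⟨hclen, h0c, hesc⟩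
      have h0c' : c.f 0 = u := h0c
      obtain ⟨n, hn⟩ := hmeets k0 c hclen hesc
      rw [wlen_top_eq hclen]
      have hn0 : 0 < n := by
        rcases Nat.eq_zero_or_pos n with rfl | h
        · exact absurd (h0c' ▸ hn) (hIO k0 u hu)
        · exact h
      exact crossing_tsum hclen hn0 (h0c'.symm ▸ hu) hn hadm
    have hgm : gmod G (ChainToInf G u) ≤ ∑' v, m v ^ 2 := by
      unfold gmod
      exact iInf₂_le m hadm'
    exact hgm.trans hE.le
  push_neg at hzero
  -- Case B: all annuli have nonzero modulus
  obtain ⟨w0⟩ : Nonempty (G.Walk v0 v1) := hconn.preconnected v0 v1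
  have hbadfin : {k : ℕ | ∃ z ∈ w0.support, z ∈ A k}.Finite := by
    set bad : Set ℕ := {k : ℕ | ∃ z ∈ w0.support, z ∈ A k} with hbad
    set wit : ℕ → V := fun k => if h : ∃ z ∈ w0.support, z ∈ A k then h.choose else v0
      with hwit
    have hwit1 : ∀ k ∈ bad, wit k ∈ w0.support ∧ wit k ∈ A k := by
      intro k hk
      have hk' : ∃ z ∈ w0.support, z ∈ A k := hk
      rw [hwit]
      simp only [dif_pos hk']
      exact ⟨hk'.choose_spec.1, hk'.choose_spec.2⟩
    refine Set.Finite.of_finite_image (f := wit) ?_ ?_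
    · refine (w0.support.toFinset : Finset V).finite_toSet.subset ?_
      rintro _ ⟨k, hk, rfl⟩
      simp only [Finset.coe_sort_coe, Finset.mem_coe, List.mem_toFinset]
      exact (hwit1 k hk).1
    · intro k hk l hl hkl
      by_contra hne
      exact Set.disjoint_left.mp (hdisj hne) (hwit1 k hk).2 (hkl ▸ (hwit1 l hl).2)
  obtain ⟨K', hK'⟩ : ∃ K' : ℕ, ∀ k, K' ≤ k → ∀ z ∈ w0.support, z ∉ A k := by
    obtain ⟨N, hN⟩ := hbadfin.bddAbove
    refine ⟨N + 1, fun k hk z hz hzA => ?_⟩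
    have := hN (show k ∈ {k : ℕ | ∃ z ∈ w0.support, z ∈ A k} from ⟨z, hz, hzA⟩)
    omega
  have hv0Inn : ∀ k, K' ≤ k → v0 ∈ Inn k := fun k hk =>
    (htri k v0 (hK' k hk v0 w0.start_mem_support)).resolve_right (hv0Out k)
  have hv1Inn : ∀ k, K' ≤ k → v1 ∈ Inn k := by
    intro k hk
    refine (htri k v1 (hK' k hk v1 w0.end_mem_support)).resolve_right fun hv1O => ?_
    obtain ⟨c, ⟨hclen, h0c, hesc⟩, hmem⟩ := hray k v1 hv1O
    have h0c' : c.f 0 = v1 := h0c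
    obtain ⟨n, hn⟩ := hsep k (prep w0 c hclen h0c') (prep_mem w0 c hclen h0c' hesc)
    rcases prep_vertex w0 c hclen h0c' n with h | ⟨mm, hmm⟩
    · exact hK' k hk _ h hn
    · rw [hmm] at hn
      exact hOutA k _ (hmem mm) hn
  have hedge : ∀ k, K' ≤ k → ∀ x ∈ Inn k, ∀ y ∈ Out k, ¬ G.Adj x y := by
    intro k hk x hx y hy hadj
    obtain ⟨wi, hwi⟩ := (hAnn k).inner_conn.2 v0 (hv0Inn k hk) x hx
    obtain ⟨c, ⟨hclen, h0c, hesc⟩, hmem⟩ := hray k y hy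
    have h0c' : c.f 0 = y := h0c
    obtain ⟨n, hn⟩ := hsep k (prep (wi.concat hadj) c hclen h0c')
      (prep_mem _ c hclen h0c' hesc)
    rcases prep_vertex (wi.concat hadj) c hclen h0c' n with h | ⟨mm, hmm⟩
    · rw [SimpleGraph.Walk.support_concat] at h
      rw [List.mem_append, List.mem_singleton] at h
      rcases h with h | h
      · exact hInnA k _ (hwi _ h) hn
      · rw [h] at hn
        exact hOutA k y hy hn
    · rw [hmm] at hn
      exact hOutA k _ (hmem mm) hn
  -- the tail of the series diverges
  have htop : ∑' k : ℕ, (annMod G (Inn (k + K')) (Out (k + K')))⁻¹ = ⊤ := by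
    by_contra htail
    have hsplit : ∀ n : ℕ, (annMod G (Inn n) (Out n))⁻¹ ≤
        (if n < K' then (annMod G (Inn n) (Out n))⁻¹ else 0) +
        (if K' ≤ n then (annMod G (Inn n) (Out n))⁻¹ else 0) := by
      intro n
      by_cases h : n < K'
      · rw [if_pos h, if_neg (by omega)]
        simp
      · rw [if_neg h, if_pos (by omega)]
        simp
    have h1 : (⊤ : ℝ≥0∞) ≤
        (∑' n, if n < K' then (annMod G (Inn n) (Out n))⁻¹ else 0) +
        ∑' n, (if K' ≤ n then (annMod G (Inn n) (Out n))⁻¹ else 0) := by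
      rw [← ENNReal.tsum_add]
      exact hsum ▸ ENNReal.tsum_le_tsum hsplit
    have h2 : (∑' n, if n < K' then (annMod G (Inn n) (Out n))⁻¹ else 0)
        = ∑ n ∈ Finset.range K', (annMod G (Inn n) (Out n))⁻¹ := by
      rw [tsum_eq_sum (s := Finset.range K') ?_]
      · exact Finset.sum_congr rfl fun n hn => if_pos (Finset.mem_range.mp hn)
      · exact fun n hn => if_neg fun h => hn (Finset.mem_range.mpr h)
    have h4 : (∑' n, if n < K' then (annMod G (Inn n) (Out n))⁻¹ else 0) +
        (∑' n, (if K' ≤ n then (annMod G (Inn n) (Out n))⁻¹ else 0)) < ⊤ := by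
      refine ENNReal.add_lt_top.mpr ⟨?_, ?_⟩
      · rw [h2]
        refine ENNReal.sum_lt_top.mpr fun n _ => ?_
        exact ENNReal.inv_lt_top.mpr (pos_iff_ne_zero.mpr (hzero n))
      · exact lt_of_le_of_lt (tsum_shift_le K') (lt_top_iff_ne_top.mpr htail)
    exact absurd (lt_of_le_of_lt h1 h4) (lt_irrefl ⊤)
  -- the main estimate
  refine le_antisymm ?_ zero_le
  refine ENNReal.le_of_forall_pos_le_add fun ε hε _ => ?_
  rw [zero_add]
  set CC : ℝ≥0∞ := 4 * ((D : ℝ≥0∞) + 1) with hCCdef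
  have hCC0 : CC ≠ 0 := by
    rw [hCCdef]
    exact mul_ne_zero (by norm_num) (lt_of_lt_of_le zero_lt_one le_add_self).ne'
  have hCCt : CC ≠ ⊤ := by
    rw [hCCdef]
    exact ENNReal.mul_ne_top (by norm_num) (by simp)
  have hε0 : (ε : ℝ≥0∞) ≠ 0 := by exact_mod_cast hε.ne'
  have hεt : (ε : ℝ≥0∞) ≠ ⊤ := ENNReal.coe_ne_top
  set C : ℝ≥0∞ := CC * (ε : ℝ≥0∞)⁻¹ with hCdef
  have hCtop : C < ⊤ := by
    rw [hCdef]
    exact ENNReal.mul_lt_top hCCt.lt_top (ENNReal.inv_lt_top.mpr (pos_iff_ne_zero.mpr hε0))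
  have hC0 : C ≠ 0 := by
    rw [hCdef]
    exact mul_ne_zero hCC0 (ENNReal.inv_ne_zero.mpr hεt)
  clear_value CC C
  -- choose a finite window with large weight
  rw [ENNReal.tsum_eq_iSup_sum] at htop
  obtain ⟨t, ht⟩ := lt_iSup_iff.mp (show C < ⨆ s : Finset ℕ,
      ∑ k ∈ s, (annMod G (Inn (k + K')) (Out (k + K')))⁻¹ from htop ▸ hCtop)
  set S : Finset ℕ := t.image (fun n => n + K') with hSdef
  have hSsum : C < ∑ k ∈ S, (annMod G (Inn k) (Out k))⁻¹ := by
    rw [hSdef, Finset.sum_image (by intro x _ y _ h; simp only at h; omega)]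
    exact ht
  have hSge : ∀ k ∈ S, K' ≤ k := by
    intro k hk
    rw [hSdef] at hk
    obtain ⟨n, _, rfl⟩ := Finset.mem_image.mp hk
    omega
  set S' : Finset ℕ := S.filter (fun k => annMod G (Inn k) (Out k) ≠ ⊤) with hS'def
  have hS'S : ∀ k ∈ S', k ∈ S := by
    intro k hk
    rw [hS'def] at hk
    exact (Finset.mem_filter.mp hk).1
  have hS'nt : ∀ k ∈ S', annMod G (Inn k) (Out k) ≠ ⊤ := by
    intro k hk
    rw [hS'def] at hk
    exact (Finset.mem_filter.mp hk).2
  have hSsum' : ∑ k ∈ S', (annMod G (Inn k) (Out k))⁻¹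
      = ∑ k ∈ S, (annMod G (Inn k) (Out k))⁻¹ := by
    rw [hS'def]
    refine Finset.sum_filter_of_ne fun k _ h => ?_
    intro hMt
    exact h (by rw [hMt]; simp)
  set L : ℝ≥0∞ := ∑ k ∈ S', (annMod G (Inn k) (Out k))⁻¹ with hLdef
  have hLC : C < L := by
    rw [hSsum']
    exact hSsum
  have hL0 : L ≠ 0 := (lt_of_le_of_lt (zero_le : (0:ℝ≥0∞) ≤ C) hLC).ne'
  have hLt : L ≠ ⊤ := by
    rw [hLdef]
    refine (ENNReal.sum_lt_top.mpr fun k _ => ?_).ne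
    exact ENNReal.inv_lt_top.mpr (pos_iff_ne_zero.mpr (hzero k))
  clear_value L
  -- choose near-optimal admissible functions for the annuli in the window
  have hpick : ∀ k, ∃ mk : V → ℝ≥0∞, k ∈ S' →
      Admissible mk (ChainConn G (Inn k) (Out k)) ∧
      ∑' v, mk v ^ 2 < 2 * annMod G (Inn k) (Out k) := by
    intro k
    by_cases hk : k ∈ S'
    · have hlt : gmod G (ChainConn G (Inn k) (Out k)) < 2 * annMod G (Inn k) (Out k) := by
        have h2 : annMod G (Inn k) (Out k) < 2 * annMod G (Inn k) (Out k) := by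
          rw [two_mul]
          exact ENNReal.lt_add_right (hS'nt k hk) (hzero k)
        exact h2
      unfold gmod at hlt
      obtain ⟨mk, hmk⟩ := iInf_lt_iff.mp hlt
      obtain ⟨ha, hb⟩ := iInf_lt_iff.mp hmk
      exact ⟨mk, fun _ => ⟨ha, hb⟩⟩
    · exact ⟨0, fun h => absurd h hk⟩
  choose mfun hmfun using hpick
  set lam : ℕ → ℝ≥0∞ := fun k => (annMod G (Inn k) (Out k))⁻¹ with hlamdef
  set mres : ℕ → V → ℝ≥0∞ := fun k => (Tnbhd G (A k)).indicator (mfun k) with hmresdef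
  set mbig : V → ℝ≥0∞ := fun v => ∑ k ∈ S', lam k * mres k v with hmbigdef
  set mfin : V → ℝ≥0∞ := fun v => L⁻¹ * mbig v with hmfindef
  -- admissibility of the combined mass distribution
  have hadmfin : Admissible mfin (ChainToInf G v1) := by
    rintro c ⟨hclen, h0c, hesc⟩
    have h0c' : c.f 0 = v1 := h0c
    have hwbig : L ≤ wlen mbig c := by
      rw [wlen_top_eq hclen]
      have hswap : ∑' n, mbig (c.f n) = ∑ k ∈ S', ∑' n, lam k * mres k (c.f n) := by
        simp only [hmbigdef]
        exact Summable.tsum_finsetSum fun k _ => ENNReal.summable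
      rw [hswap, hLdef]
      refine Finset.sum_le_sum fun k hk => ?_
      rw [ENNReal.tsum_mul_left]
      have hkK : K' ≤ k := hSge k (hS'S k hk)
      have hcross : (1 : ℝ≥0∞) ≤ ∑' n, mres k (c.f n) := by
        simp only [hmresdef]
        exact crossing_tsum_res hclen (h0c'.symm ▸ hv1Inn k hkK) (hIO k) (htri k)
          (hmeets k c hclen hesc) (hedge k hkK) (hmfun k hk).1
      calc lam k = lam k * 1 := (mul_one _).symm
        _ ≤ lam k * ∑' n, mres k (c.f n) := mul_le_mul_right hcross _
    have hwm : wlen mfin c = L⁻¹ * wlen mbig c := by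
      rw [hmfindef]
      exact wlen_mul L⁻¹ mbig c
    rw [hwm]
    calc (1 : ℝ≥0∞) = L⁻¹ * L := (ENNReal.inv_mul_cancel hL0 hLt).symm
      _ ≤ L⁻¹ * wlen mbig c := mul_le_mul_right hwbig _
  -- energy estimate
  have henergy : ∑' v, mfin v ^ 2 ≤ CC * L⁻¹ := by
    have hpt : ∀ v, mbig v ^ 2 ≤ (2 * ((D : ℝ≥0∞) + 1)) * ∑ k ∈ S', (lam k * mres k v) ^ 2 := by
      intro v
      set sv : Finset ℕ := S'.filter (fun k => v ∈ Tnbhd G (A k)) with hsvdef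
      have hv1' : ∑ k ∈ S', lam k * mres k v = ∑ k ∈ sv, lam k * mres k v := by
        rw [hsvdef]
        refine (Finset.sum_filter_of_ne fun k hk h => ?_).symm
        by_contra hvT
        refine h ?_
        simp only [hmresdef]
        rw [Set.indicator_of_notMem hvT, mul_zero]
      have hcard : sv.card ≤ D + 1 := by
        refine card_tnbhd_le hdisj hval hlocfin v sv fun k hk => ?_
        rw [hsvdef] at hk
        exact (Finset.mem_filter.mp hk).2
      calc mbig v ^ 2 = (∑ k ∈ sv, lam k * mres k v) ^ 2 := by
            simp only [hmbigdef]
            rw [hv1']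
        _ ≤ 2 * sv.card * ∑ k ∈ sv, (lam k * mres k v) ^ 2 := sq_sum_le_ennreal _ _
        _ ≤ (2 * ((D : ℝ≥0∞) + 1)) * ∑ k ∈ S', (lam k * mres k v) ^ 2 := by
            refine mul_le_mul ?_ ?_ zero_le zero_le
            · refine mul_le_mul_right ?_ 2
              exact_mod_cast hcard
            · exact Finset.sum_le_sum_of_subset (by rw [hsvdef]; exact Finset.filter_subset _ _)
    have h1 : ∑' v, mbig v ^ 2 ≤
        (2 * ((D : ℝ≥0∞) + 1)) * ∑ k ∈ S', lam k ^ 2 * (∑' v, mres k v ^ 2) := by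
      calc ∑' v, mbig v ^ 2
          ≤ ∑' v, (2 * ((D : ℝ≥0∞) + 1)) * ∑ k ∈ S', (lam k * mres k v) ^ 2 :=
            ENNReal.tsum_le_tsum hpt
        _ = (2 * ((D : ℝ≥0∞) + 1)) * ∑' v, ∑ k ∈ S', (lam k * mres k v) ^ 2 :=
            ENNReal.tsum_mul_left
        _ = (2 * ((D : ℝ≥0∞) + 1)) * ∑ k ∈ S', ∑' v, (lam k * mres k v) ^ 2 := by
            rw [Summable.tsum_finsetSum fun k _ => ENNReal.summable]
        _ = (2 * ((D : ℝ≥0∞) + 1)) * ∑ k ∈ S', lam k ^ 2 * (∑' v, mres k v ^ 2) := by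
            congr 1
            refine Finset.sum_congr rfl fun k _ => ?_
            rw [← ENNReal.tsum_mul_left]
            exact tsum_congr fun v => by rw [mul_pow]
    have h2 : ∀ k ∈ S', lam k ^ 2 * (∑' v, mres k v ^ 2) ≤ 2 * lam k := by
      intro k hk
      have hEk : ∑' v, mres k v ^ 2 ≤ 2 * annMod G (Inn k) (Out k) := by
        refine le_trans (ENNReal.tsum_le_tsum fun v => ?_) (hmfun k hk).2.le
        simp only [hmresdef]
        by_cases h : v ∈ Tnbhd G (A k)
        · rw [Set.indicator_of_mem h]
        · rw [Set.indicator_of_notMem h]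
          simp
      have hlamM : lam k * annMod G (Inn k) (Out k) = 1 := by
        rw [hlamdef]
        exact ENNReal.inv_mul_cancel (hzero k) (hS'nt k hk)
      calc lam k ^ 2 * (∑' v, mres k v ^ 2)
          ≤ lam k ^ 2 * (2 * annMod G (Inn k) (Out k)) := mul_le_mul_right hEk _
        _ = 2 * (lam k * (lam k * annMod G (Inn k) (Out k))) := by ring
        _ = 2 * lam k := by rw [hlamM, mul_one]
    have h3 : ∑' v, mbig v ^ 2 ≤ (2 * ((D : ℝ≥0∞) + 1)) * (2 * L) := by
      refine h1.trans (mul_le_mul_right ?_ _)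
      calc ∑ k ∈ S', lam k ^ 2 * (∑' v, mres k v ^ 2)
          ≤ ∑ k ∈ S', 2 * lam k := Finset.sum_le_sum h2
        _ = 2 * L := by rw [hLdef, ← Finset.mul_sum, hlamdef]
    have h4 : ∑' v, mfin v ^ 2 = L⁻¹ ^ 2 * ∑' v, mbig v ^ 2 := by
      rw [← ENNReal.tsum_mul_left]
      refine tsum_congr fun v => ?_
      simp only [hmfindef]
      rw [mul_pow]
    rw [h4]
    calc L⁻¹ ^ 2 * ∑' v, mbig v ^ 2
        ≤ L⁻¹ ^ 2 * ((2 * ((D : ℝ≥0∞) + 1)) * (2 * L)) := mul_le_mul_right h3 _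
      _ = CC * L⁻¹ * (L⁻¹ * L) := by
          rw [hCCdef]
          ring
      _ = CC * L⁻¹ := by rw [ENNReal.inv_mul_cancel hL0 hLt, mul_one]
  -- conclusion
  have hfinal : CC * L⁻¹ ≤ (ε : ℝ≥0∞) := by
    have hLC' : L⁻¹ ≤ C⁻¹ := ENNReal.inv_le_inv' hLC.le
    have hCinv : C⁻¹ = CC⁻¹ * (ε : ℝ≥0∞) := by
      rw [hCdef, ENNReal.mul_inv (Or.inl hCC0) (Or.inl hCCt), inv_inv]
    calc CC * L⁻¹ ≤ CC * C⁻¹ := mul_le_mul_right hLC' _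
      _ = CC * CC⁻¹ * (ε : ℝ≥0∞) := by rw [hCinv, mul_assoc]
      _ = (ε : ℝ≥0∞) := by rw [ENNReal.mul_inv_cancel hCC0 hCCt, one_mul]
  have hgm : gmod G (ChainToInf G v1) ≤ ∑' v, mfin v ^ 2 := by
    unfold gmod
    exact iInf₂_le mfin hadmfin
  exact hgm.trans (henergy.trans hfinal)
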